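/- Let f(z) = ∑_{k≥0} a_k z^k be a power series with null radius of convergence (limsup_{k→∞} |a_k|^{1/k} = ∞), with a_0 ≠ 0, such that every a_k is real and non-negative and a_{n−1}·a_{n+1} > a_n² for all n ≥ 1. Set α_n = a_n^{1/n} and q_n(z) = s_n(z/α_n) = ∑_{k=0}^n a_k α_n^{−k} z^k. Then the zero counting measures of (q_n) converge absolutely to the unit circle: for every ε > 0, (1/n)·#{ zeros w of q_n, counted with multiplicity, with | |w| − 1 | > ε } → 0 as n → ∞. -/

import Mathlib

open Filter Polynomial
open scoped Classical Real

noncomputable section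

namespace Stmt9Aux

/-- squared ℓ² norm of the coefficients of a complex polynomial -/
def n2 (p : Polynomial ℂ) : ℝ :=
  ∑ k ∈ Finset.range (p.natDegree + 1), Complex.normSq (p.coeff k)

lemma n2_eq_range {p : Polynomial ℂ} {N : ℕ} (h : p.natDegree < N) :
    n2 p = ∑ k ∈ Finset.range N, Complex.normSq (p.coeff k) := by
  refine Finset.sum_subset (Finset.range_subset_range.2 h) ?_
  intro k _ hk
  rw [Finset.mem_range, not_lt] at hk
  rw [p.coeff_eq_zero_of_natDegree_lt (by omega), map_zero]

lemma normSq_coeff_le_n2 (p : Polynomial ℂ) (k : ℕ) :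
    Complex.normSq (p.coeff k) ≤ n2 p := by
  by_cases hk : k < p.natDegree + 1
  · exact Finset.single_le_sum (f := fun j => Complex.normSq (p.coeff j))
      (fun j _ => Complex.normSq_nonneg _) (Finset.mem_range.2 hk)
  · rw [p.coeff_eq_zero_of_natDegree_lt (by omega), map_zero]
    exact Finset.sum_nonneg fun j _ => Complex.normSq_nonneg _

lemma n2_swap (w : ℂ) (q : Polynomial ℂ) :
    n2 ((Polynomial.C (starRingEnd ℂ w) * X - Polynomial.C 1) * q)
      = n2 ((X - Polynomial.C w) * q) := by
  set m := q.natDegree with hm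
  have hd1 : ((X - Polynomial.C w) * q).natDegree < m + 1 + 1 := by
    have := natDegree_mul_le (p := X - Polynomial.C w) (q := q)
    have h1 : (X - Polynomial.C w).natDegree ≤ 1 := (natDegree_X_sub_C w).le
    omega
  have hd2 : ((Polynomial.C (starRingEnd ℂ w) * X - Polynomial.C 1) * q).natDegree < m + 1 + 1 := by
    have := natDegree_mul_le (p := Polynomial.C (starRingEnd ℂ w) * X - Polynomial.C 1) (q := q)
    have h1 : (Polynomial.C (starRingEnd ℂ w) * X - Polynomial.C 1).natDegree ≤ 1 := by
      refine (natDegree_sub_le _ _).trans (max_le ?_ ?_)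
      · exact le_trans (natDegree_C_mul_le _ _) (le_of_eq natDegree_X)
      · simp
    omega
  rw [n2_eq_range hd1, n2_eq_range hd2]
  -- coefficient formulas
  have c1 : ∀ k : ℕ, ((X - Polynomial.C w) * q).coeff (k+1)
      = q.coeff k - w * q.coeff (k+1) := by
    intro k
    rw [sub_mul, coeff_sub, coeff_X_mul, coeff_C_mul]
  have c10 : ((X - Polynomial.C w) * q).coeff 0 = - (w * q.coeff 0) := by
    rw [sub_mul, coeff_sub, mul_coeff_zero, coeff_X_zero, coeff_C_mul, zero_mul, zero_sub]
  have c2 : ∀ k : ℕ, ((Polynomial.C (starRingEnd ℂ w) * X - Polynomial.C 1) * q).coeff (k+1)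
      = (starRingEnd ℂ w) * q.coeff k - q.coeff (k+1) := by
    intro k
    rw [sub_mul, coeff_sub, mul_assoc, coeff_C_mul, coeff_X_mul, map_one, one_mul]
  have c20 : ((Polynomial.C (starRingEnd ℂ w) * X - Polynomial.C 1) * q).coeff 0
      = - q.coeff 0 := by
    rw [sub_mul, coeff_sub, mul_assoc, coeff_C_mul, mul_coeff_zero, coeff_X_zero, zero_mul,
      mul_zero, map_one, one_mul, zero_sub]
  conv_lhs => rw [Finset.sum_range_succ']
  conv_rhs => rw [Finset.sum_range_succ']
  have key : ∀ k : ℕ,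
      Complex.normSq ((starRingEnd ℂ w) * q.coeff k - q.coeff (k+1))
        - Complex.normSq (q.coeff k - w * q.coeff (k+1))
      = (Complex.normSq w - 1) * Complex.normSq (q.coeff k)
        - (Complex.normSq w - 1) * Complex.normSq (q.coeff (k+1)) := by
    intro k
    have e1 : (q.coeff k * starRingEnd ℂ (w * q.coeff (k+1))).re
        = ((starRingEnd ℂ w * q.coeff k) * starRingEnd ℂ (q.coeff (k+1))).re := by
      congr 1
      rw [map_mul]; ring
    rw [Complex.normSq_sub, Complex.normSq_sub, Complex.normSq_mul, Complex.normSq_mul,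
      Complex.normSq_conj, e1]
    ring
  have tele : ∑ k ∈ Finset.range (m + 1),
      (Complex.normSq ((starRingEnd ℂ w) * q.coeff k - q.coeff (k+1))
        - Complex.normSq (q.coeff k - w * q.coeff (k+1)))
      = (Complex.normSq w - 1) * Complex.normSq (q.coeff 0)
        - (Complex.normSq w - 1) * Complex.normSq (q.coeff (m+1)) := by
    have := Finset.sum_range_sub' (fun i => (Complex.normSq w - 1) * Complex.normSq (q.coeff i))
      (m + 1)
    rw [← this]
    exact Finset.sum_congr rfl fun k _ => key k
  have hqm : q.coeff (m + 1) = 0 := coeff_natDegree_succ_eq_zero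
  rw [hqm, map_zero, mul_zero, sub_zero] at tele
  have expand : ∀ k ∈ Finset.range (m+1),
      Complex.normSq (((Polynomial.C (starRingEnd ℂ w) * X - Polynomial.C 1) * q).coeff (k+1))
      = Complex.normSq ((starRingEnd ℂ w) * q.coeff k - q.coeff (k+1)) := by
    intro k _; rw [c2]
  have expand' : ∀ k ∈ Finset.range (m+1),
      Complex.normSq (((X - Polynomial.C w) * q).coeff (k+1))
      = Complex.normSq (q.coeff k - w * q.coeff (k+1)) := by
    intro k _; rw [c1]
  rw [Finset.sum_congr rfl expand, Finset.sum_congr rfl expand', c10, c20]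
  have hsub := Finset.sum_sub_distrib
    (f := fun k => Complex.normSq ((starRingEnd ℂ w) * q.coeff k - q.coeff (k+1)))
    (g := fun k => Complex.normSq (q.coeff k - w * q.coeff (k+1)))
    (s := Finset.range (m+1))
  rw [hsub] at tele
  have h0 : Complex.normSq (-(w * q.coeff 0)) = Complex.normSq w * Complex.normSq (q.coeff 0) := by
    rw [Complex.normSq_neg, Complex.normSq_mul]
  have h0' : Complex.normSq (- q.coeff 0) = Complex.normSq (q.coeff 0) := Complex.normSq_neg _
  rw [h0, h0']
  linarith

end Stmt9Aux

namespace Stmt9Aux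

def Fsw (w : ℂ) : Polynomial ℂ :=
  if 1 < ‖w‖ then Polynomial.C (starRingEnd ℂ w) * X - Polynomial.C 1
  else X - Polynomial.C w

lemma n2_swap_prod (T : Multiset ℂ) : ∀ q : Polynomial ℂ,
    n2 ((T.map Fsw).prod * q) = n2 ((T.map fun w => X - Polynomial.C w).prod * q) := by
  induction T using Multiset.induction_on with
  | empty => intro q; simp
  | cons a T ih =>
    intro q
    rw [Multiset.map_cons, Multiset.map_cons, Multiset.prod_cons, Multiset.prod_cons]
    have e1 : Fsw a * (T.map Fsw).prod * q = (T.map Fsw).prod * (Fsw a * q) := by ring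
    rw [e1, ih (Fsw a * q)]
    have e2 : (T.map fun w => X - Polynomial.C w).prod * (Fsw a * q)
        = Fsw a * ((T.map fun w => X - Polynomial.C w).prod * q) := by ring
    rw [e2]
    unfold Fsw
    by_cases h : 1 < ‖a‖
    · rw [if_pos h, n2_swap a ((T.map fun w => X - Polynomial.C w).prod * q), ← mul_assoc]
    · rw [if_neg h, ← mul_assoc]

lemma leadingCoeff_Fsw (w : ℂ) :
    ‖(Fsw w).leadingCoeff‖ = max 1 (‖w‖) := by
  unfold Fsw
  by_cases h : 1 < ‖w‖
  · rw [if_pos h]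
    have hw : (starRingEnd ℂ) w ≠ 0 := by
      simp only [ne_eq, _root_.map_eq_zero]
      intro h0; rw [h0] at h; simp at h; linarith
    have e : Polynomial.C (starRingEnd ℂ w) * X - Polynomial.C 1
        = Polynomial.C (starRingEnd ℂ w) * X + Polynomial.C (-1) := by
      rw [map_neg]; ring
    rw [e, leadingCoeff_linear hw, Complex.norm_conj]
    exact (max_eq_right h.le).symm
  · rw [if_neg h, (monic_X_sub_C w).leadingCoeff, norm_one]
    exact (max_eq_left (not_lt.1 h)).symm

lemma abs_multiset_prod (s : Multiset ℂ) :
    ‖s.prod‖ = (s.map norm).prod := by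
  induction s using Multiset.induction_on with
  | empty => simp
  | cons a s ih => simp [map_mul, ih]

lemma landau (T : Multiset ℂ) :
    ((T.map fun w => max 1 (‖w‖)).prod) ^ 2
      ≤ n2 ((T.map fun w => X - Polynomial.C w).prod) := by
  have hswap := n2_swap_prod T 1
  rw [mul_one, mul_one] at hswap
  set P := (T.map Fsw).prod with hP
  have hlead : ‖P.leadingCoeff‖ = (T.map fun w => max 1 (‖w‖)).prod := by
    rw [hP, leadingCoeff_multiset_prod, abs_multiset_prod, Multiset.map_map, Multiset.map_map]
    congr 1
    exact Multiset.map_congr rfl fun w _ => leadingCoeff_Fsw w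
  calc ((T.map fun w => max 1 (‖w‖)).prod) ^ 2
      = ‖P.leadingCoeff‖ ^ 2 := by rw [hlead]
    _ = Complex.normSq P.leadingCoeff := Complex.sq_norm _
    _ ≤ n2 P := normSq_coeff_le_n2 P P.natDegree
    _ = _ := hswap

end Stmt9Aux

namespace Stmt9Aux

lemma ms_prod_nonneg (s : Multiset ℂ) (f : ℂ → ℝ) (h : ∀ x ∈ s, 0 ≤ f x) :
    0 ≤ (s.map f).prod := by
  induction s using Multiset.induction_on with
  | empty => simp
  | cons a s ih =>
    rw [Multiset.map_cons, Multiset.prod_cons]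
    exact mul_nonneg (h a (Multiset.mem_cons_self a s))
      (ih fun x hx => h x (Multiset.mem_cons_of_mem hx))

lemma ms_one_le_prod (s : Multiset ℂ) (f : ℂ → ℝ) (h : ∀ x ∈ s, 1 ≤ f x) :
    1 ≤ (s.map f).prod := by
  induction s using Multiset.induction_on with
  | empty => simp
  | cons a s ih =>
    rw [Multiset.map_cons, Multiset.prod_cons]
    have h1 := h a (Multiset.mem_cons_self a s)
    have h2 := ih fun x hx => h x (Multiset.mem_cons_of_mem hx)
    nlinarith

lemma ms_prod_le_prod (s : Multiset ℂ) (f g : ℂ → ℝ) (h0 : ∀ x ∈ s, 0 ≤ f x)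
    (h : ∀ x ∈ s, f x ≤ g x) : (s.map f).prod ≤ (s.map g).prod := by
  induction s using Multiset.induction_on with
  | empty => simp
  | cons a s ih =>
    rw [Multiset.map_cons, Multiset.prod_cons, Multiset.map_cons, Multiset.prod_cons]
    have h1 := h a (Multiset.mem_cons_self a s)
    have h2 := h0 a (Multiset.mem_cons_self a s)
    have h3 := ih (fun x hx => h0 x (Multiset.mem_cons_of_mem hx))
      (fun x hx => h x (Multiset.mem_cons_of_mem hx))
    have h4 : (0:ℝ) ≤ (s.map f).prod :=
      ms_prod_nonneg s f fun x hx => h0 x (Multiset.mem_cons_of_mem hx)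
    nlinarith

lemma ms_pow_card_le (s : Multiset ℂ) (f : ℂ → ℝ) (c : ℝ) (hc : 0 ≤ c)
    (h : ∀ x ∈ s, c ≤ f x) : c ^ Multiset.card s ≤ (s.map f).prod := by
  induction s using Multiset.induction_on with
  | empty => simp
  | cons a s ih =>
    rw [Multiset.map_cons, Multiset.prod_cons, Multiset.card_cons, pow_succ, mul_comm (c ^ _) c]
    have h1 := h a (Multiset.mem_cons_self a s)
    have h2 := ih fun x hx => h x (Multiset.mem_cons_of_mem hx)
    have h3 : (0:ℝ) ≤ c ^ Multiset.card s := pow_nonneg hc _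
    nlinarith

lemma ms_prod_le_pow_card (s : Multiset ℂ) (f : ℂ → ℝ) (c : ℝ) (h0 : ∀ x ∈ s, 0 ≤ f x)
    (h : ∀ x ∈ s, f x ≤ c) : (s.map f).prod ≤ c ^ Multiset.card s := by
  induction s using Multiset.induction_on with
  | empty => simp
  | cons a s ih =>
    rw [Multiset.map_cons, Multiset.prod_cons, Multiset.card_cons, pow_succ, mul_comm (c ^ _) c]
    have h1 := h a (Multiset.mem_cons_self a s)
    have h2 := ih (fun x hx => h0 x (Multiset.mem_cons_of_mem hx))
      (fun x hx => h x (Multiset.mem_cons_of_mem hx))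
    have h4 : (0:ℝ) ≤ (s.map f).prod :=
      ms_prod_nonneg s f fun x hx => h0 x (Multiset.mem_cons_of_mem hx)
    have h5 := h0 a (Multiset.mem_cons_self a s)
    nlinarith

/-- counting lemma: if `(1+η)^N ≤ K` then `N ≤ 2√K/η + 1`. -/
lemma count_le (η K : ℝ) (hη : 0 < η) (N : ℕ) (h : (1+η)^N ≤ K) :
    (N : ℝ) ≤ 2 * Real.sqrt K / η + 1 := by
  set m := N / 2 with hm
  have hN : N ≤ 2 * m + 1 := by omega
  have h2m : (1+η)^(2*m) ≤ K := by
    refine le_trans (pow_le_pow_right₀ (by linarith) (by omega)) h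
  have hB : 1 + (m:ℝ) * η ≤ (1+η)^m := one_add_mul_le_pow (by linarith) m
  have hsq : (1 + (m:ℝ)*η)^2 ≤ K := by
    have e : (1+η)^(2*m) = ((1+η)^m)^2 := by rw [← pow_mul, mul_comm]
    have h1 : (0:ℝ) ≤ 1 + (m:ℝ)*η := by positivity
    nlinarith
  have hle : 1 + (m:ℝ)*η ≤ Real.sqrt K := by
    rw [Real.le_sqrt (by positivity) (by nlinarith)]
    exact hsq
  have hm' : (m:ℝ) ≤ Real.sqrt K / η := by
    rw [le_div_iff₀ hη]
    nlinarith
  have hNm : (N:ℝ) ≤ 2*(m:ℝ) + 1 := by exact_mod_cast hN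
  have e : 2 * Real.sqrt K / η = 2 * (Real.sqrt K / η) := by ring
  rw [e]
  linarith

/-- a positive sequence with nondecreasing ratios is maximized at the endpoints -/
lemma max_endpoint (c : ℕ → ℝ) (hpos : ∀ k, 0 < c k)
    (hcross : ∀ i j, i ≤ j → c (i+1) * c j ≤ c i * c (j+1)) :
    ∀ n k, k ≤ n → c k ≤ max (c 0) (c n) := by
  intro n k hk
  by_cases h0 : c k ≤ c 0
  · exact le_trans h0 (le_max_left _ _)
  have hex : ∃ j, j < k ∧ c j < c (j+1) := by
    by_contra hcon
    push_neg at hcon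
    apply h0
    have : ∀ m, m ≤ k → c m ≤ c 0 := by
      intro m
      induction m with
      | zero => intro _; exact le_refl _
      | succ m ih =>
        intro hmk
        exact le_trans (hcon m (by omega)) (ih (by omega))
    exact this k le_rfl
  obtain ⟨j, hjk, hj⟩ := hex
  have hstep : ∀ m, j ≤ m → c m < c (m+1) := by
    intro m hm
    have hc := hcross j m hm
    nlinarith [hpos m, hpos (m+1), hpos j, hpos (j+1)]
  have hup : ∀ m, k ≤ m → c k ≤ c m := by
    intro m
    refine Nat.le_induction le_rfl ?_ m
    intro m hm ih
    exact ih.trans (hstep m (by omega)).le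
  exact le_trans (hup n hk) (le_max_right _ _)

end Stmt9Aux

namespace Stmt9Aux

lemma sqrt_le_self' {x : ℝ} (hx : 1 ≤ x) : Real.sqrt x ≤ x := by
  nlinarith [Real.sq_sqrt (by linarith : (0:ℝ) ≤ x), Real.sqrt_nonneg x]

set_option maxHeartbeats 1600000 in
lemma main_bound (a : ℕ → ℝ) (α : ℕ → ℝ) (Q : ℕ → Polynomial ℂ)
    (hpos : ∀ k, 0 < a k)
    (hcross : ∀ i j : ℕ, i ≤ j → a (i+1) * a j ≤ a i * a (j+1))
    (hα : ∀ n : ℕ, α n = a n ^ ((n : ℝ)⁻¹))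
    (hQ : ∀ n : ℕ, Q n = ∑ k ∈ Finset.range (n + 1),
      Polynomial.C ((a k : ℂ) * ((α n : ℂ))⁻¹ ^ k) * Polynomial.X ^ k)
    (ε : ℝ) (hε : 0 < ε) :
    ∃ A : ℝ, 0 ≤ A ∧ ∀ n : ℕ, 1 ≤ n →
      (((Q n).roots.filter fun w => ε < |‖w‖ - 1|).card : ℝ)
        ≤ A * Real.sqrt ((n:ℝ)+1) + 2 := by
  set M : ℝ := max (a 0) 1 with hMdef
  have hM1 : (1:ℝ) ≤ M := le_max_right _ _
  have hMa : a 0 ≤ M := le_max_left _ _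
  have hM0 : (0:ℝ) < M := by linarith
  set δ : ℝ := min ε (1/2) with hδdef
  have hδpos : 0 < δ := lt_min hε (by norm_num)
  have hδε : δ ≤ ε := min_le_left _ _
  have hδhalf : δ ≤ 1/2 := min_le_right _ _
  have h1δ : (0:ℝ) < 1 - δ := by linarith
  set η : ℝ := δ / (1 - δ) with hηdef
  have hηpos : 0 < η := div_pos hδpos h1δ
  set c0 : ℝ := max 1 (a 0)⁻¹ with hc0def
  have hc01 : (1:ℝ) ≤ c0 := le_max_left _ _
  set A : ℝ := M * (2/ε + 2*c0/η) with hAdef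
  have hA0 : 0 ≤ A := by
    have : 0 ≤ 2/ε + 2*c0/η := by positivity
    positivity
  refine ⟨A, hA0, ?_⟩
  intro n hn
  -- basic facts about α
  have hαpos : 0 < α n := by rw [hα]; exact Real.rpow_pos_of_pos (hpos n) _
  have hαpow : (α n) ^ n = a n := by
    rw [hα]; exact Real.rpow_inv_natCast_pow (hpos n).le (by omega)
  -- normalized coefficients
  set b : ℕ → ℝ := fun k => a k * ((α n)⁻¹) ^ k with hbdef
  have hbpos : ∀ k, 0 < b k := fun k => by
    have := hpos k; positivity
  have hb0 : b 0 = a 0 := by simp [hbdef]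
  have hbn : b n = 1 := by
    rw [hbdef]
    simp only [inv_pow, hαpow]
    exact mul_inv_cancel₀ (hpos n).ne'
  have hbcross : ∀ i j : ℕ, i ≤ j → b (i+1) * b j ≤ b i * b (j+1) := by
    intro i j hij
    have h1 := hcross i j hij
    have ht : (0:ℝ) ≤ ((α n)⁻¹) ^ (i+j+1) := by positivity
    have e1 : b (i+1) * b j = (a (i+1) * a j) * ((α n)⁻¹) ^ (i+j+1) := by
      simp only [hbdef]; ring
    have e2 : b i * b (j+1) = (a i * a (j+1)) * ((α n)⁻¹) ^ (i+j+1) := by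
      simp only [hbdef]; ring
    rw [e1, e2]
    exact mul_le_mul_of_nonneg_right h1 ht
  have hbM : ∀ k, k ≤ n → b k ≤ M := by
    intro k hk
    have := max_endpoint b hbpos hbcross n k hk
    rw [hb0, hbn] at this
    refine this.trans ?_
    exact max_le (le_max_left _ _) (le_max_right _ _)
  -- coefficients of Q n
  have hcoeffC : ∀ k, (Q n).coeff k
      = if k ∈ Finset.range (n+1) then ((a k : ℂ) * ((α n : ℂ))⁻¹ ^ k) else 0 := by
    intro k
    rw [hQ n, Polynomial.finset_sum_coeff]
    simp only [Polynomial.coeff_C_mul, Polynomial.coeff_X_pow, mul_ite, mul_one, mul_zero]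
    rw [Finset.sum_ite_eq (Finset.range (n+1)) k (fun j => (a j : ℂ) * ((α n : ℂ))⁻¹ ^ j)]
  have hbc : ∀ k, ((a k : ℂ) * ((α n : ℂ))⁻¹ ^ k) = ((b k : ℝ) : ℂ) := by
    intro k
    rw [hbdef]
    push_cast
    ring
  have hcz : ∀ k, n < k → (Q n).coeff k = 0 := by
    intro k hk
    rw [hcoeffC, if_neg]
    simp only [Finset.mem_range]
    omega
  have hdegle : (Q n).natDegree ≤ n :=
    Polynomial.natDegree_le_iff_coeff_eq_zero.2 fun N hN => hcz N hN
  have hcn1 : (Q n).coeff n = 1 := by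
    rw [hcoeffC, if_pos (Finset.mem_range.2 (by omega)), hbc, hbn]
    norm_num
  have hdeg : (Q n).natDegree = n :=
    le_antisymm hdegle (Polynomial.le_natDegree_of_ne_zero (by rw [hcn1]; exact one_ne_zero))
  have hmonic : (Q n).Monic := by
    rw [Polynomial.Monic, Polynomial.leadingCoeff, hdeg, hcn1]
  -- ℓ² bound on coefficients
  have hn2 : n2 (Q n) ≤ ((n:ℝ)+1) * M^2 := by
    have hlt : (Q n).natDegree < n + 1 := by omega
    rw [n2_eq_range hlt]
    have hterm : ∀ k ∈ Finset.range (n+1), Complex.normSq ((Q n).coeff k) ≤ M^2 := by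
      intro k hk
      rw [Finset.mem_range] at hk
      rw [hcoeffC, if_pos (Finset.mem_range.2 hk), hbc, Complex.normSq_ofReal]
      have h1 := hbpos k
      have h2 := hbM k (by omega)
      nlinarith
    calc ∑ k ∈ Finset.range (n+1), Complex.normSq ((Q n).coeff k)
        ≤ ∑ _k ∈ Finset.range (n+1), M^2 := Finset.sum_le_sum hterm
      _ = ((n:ℝ)+1) * M^2 := by
          rw [Finset.sum_const, Finset.card_range, nsmul_eq_mul]
          push_cast
          ring
  -- roots
  have hsplits : Polynomial.Splits (Q n) := IsAlgClosed.splits (Q n)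
  set T : Multiset ℂ := (Q n).roots with hTdef
  have hTcard : Multiset.card T = n := by
    rw [hTdef]
    exact (Polynomial.splits_iff_card_roots.1 hsplits).trans hdeg
  have hprod : (Q n) = (T.map fun w => X - Polynomial.C w).prod :=
    hsplits.eq_prod_roots_of_monic hmonic
  set g : ℂ → ℝ := fun w => max 1 (‖w‖) with hgdef
  set Pi : ℝ := (T.map g).prod with hPidef
  have hPi2 : Pi^2 ≤ ((n:ℝ)+1) * M^2 := by
    refine (landau T).trans ?_
    rw [← hprod]
    exact hn2
  have hPi1 : (1:ℝ) ≤ Pi := ms_one_le_prod T g fun x _ => le_max_left _ _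
  set K : ℝ := Real.sqrt ((n:ℝ)+1) * M with hKdef
  have hsq1 : (1:ℝ) ≤ Real.sqrt ((n:ℝ)+1) := by
    have h := Real.sqrt_le_sqrt (show (1:ℝ) ≤ (n:ℝ)+1 by linarith [show (0:ℝ) ≤ (n:ℝ) from Nat.cast_nonneg n])
    rwa [Real.sqrt_one] at h
  have hK1 : (1:ℝ) ≤ K := by
    rw [hKdef]; nlinarith
  have hK2 : K^2 = ((n:ℝ)+1) * M^2 := by
    rw [hKdef, mul_pow, Real.sq_sqrt (by positivity)]
  have hPiK : Pi ≤ K := by nlinarith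
  -- product of the absolute values of the roots is a 0
  have habs0 : (T.map norm).prod = a 0 := by
    have h1 : (Q n).coeff 0 = ((a 0 : ℝ) : ℂ) := by
      rw [hcoeffC, if_pos (Finset.mem_range.2 (by omega))]
      simp
    have h2 : (Q n).eval 0 = ((a 0 : ℝ) : ℂ) := by
      rw [← Polynomial.coeff_zero_eq_eval_zero, h1]
    have h3 : ‖((Q n).eval 0)‖ = (T.map norm).prod := by
      conv_lhs => rw [hprod]
      rw [Polynomial.eval_multiset_prod, Multiset.map_map, abs_multiset_prod, Multiset.map_map]
      congr 1
      refine Multiset.map_congr rfl fun w _ => ?_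
      simp
    rw [← h3, h2, Complex.norm_real, Real.norm_eq_abs, abs_of_pos (hpos 0)]
  -- the two bad root counts
  set Sp : Multiset ℂ := T.filter (fun w => 1 + ε < ‖w‖) with hSpdef
  set Sm : Multiset ℂ := T.filter (fun w => ‖w‖ < 1 - δ) with hSmdef
  -- card split
  have hcard : ((T.filter fun w => ε < |‖w‖ - 1|).card : ℕ)
      ≤ Multiset.card Sp + Multiset.card Sm := by
    set U := T.filter (fun w => ε < |‖w‖ - 1|) with hUdef
    have hUle : U ≤ T := Multiset.filter_le _ T
    have hU : U.filter (fun w => 1 + ε < ‖w‖)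
        + U.filter (fun w => ¬ (1 + ε < ‖w‖)) = U :=
      Multiset.filter_add_not _ U
    have h1 : U.filter (fun w => 1 + ε < ‖w‖) ≤ Sp :=
      Multiset.filter_le_filter _ hUle
    have h2 : U.filter (fun w => ¬ (1 + ε < ‖w‖)) ≤ Sm := by
      rw [hUdef, Multiset.filter_filter]
      refine Multiset.monotone_filter_right T ?_
      intro w hw
      obtain ⟨hw1, hw2⟩ := hw
      rcases lt_abs.1 hw2 with h | h
      · exact absurd (by linarith) hw1
      · have : ‖w‖ < 1 - ε := by linarith
        linarith
    calc Multiset.card U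
        = Multiset.card (U.filter (fun w => 1 + ε < ‖w‖))
          + Multiset.card (U.filter (fun w => ¬ (1 + ε < ‖w‖))) := by
            rw [← Multiset.card_add, hU]
      _ ≤ Multiset.card Sp + Multiset.card Sm :=
          Nat.add_le_add (Multiset.card_le_card h1) (Multiset.card_le_card h2)
  -- bound on card Sp
  have hNp : ((1:ℝ)+ε) ^ (Multiset.card Sp) ≤ Pi := by
    have hsplit : Sp + T.filter (fun w => ¬ (1 + ε < ‖w‖)) = T :=
      Multiset.filter_add_not _ T
    have hPisplit : Pi = (Sp.map g).prod
        * ((T.filter fun w => ¬ (1 + ε < ‖w‖)).map g).prod := by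
      rw [hPidef]
      conv_lhs => rw [← hsplit]
      rw [Multiset.map_add, Multiset.prod_add]
    have h1 : ((1:ℝ)+ε) ^ (Multiset.card Sp) ≤ (Sp.map g).prod := by
      refine ms_pow_card_le Sp g (1+ε) (by linarith) fun x hx => ?_
      have hx2 := (Multiset.mem_filter.1 hx).2
      exact le_trans hx2.le (le_max_right _ _)
    have h2 : (1:ℝ) ≤ ((T.filter fun w => ¬ (1 + ε < ‖w‖)).map g).prod :=
      ms_one_le_prod _ g fun x _ => le_max_left _ _
    have h3 : (0:ℝ) ≤ (Sp.map g).prod :=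
      ms_prod_nonneg _ g fun x _ => le_trans zero_le_one (le_max_left _ _)
    rw [hPisplit]
    nlinarith
  -- bound on card Sm
  have hNm : a 0 ≤ (1-δ) ^ (Multiset.card Sm) * Pi := by
    have hsplit : Sm + T.filter (fun w => ¬ (‖w‖ < 1 - δ)) = T :=
      Multiset.filter_add_not _ T
    have habssplit : (Sm.map norm).prod
        * ((T.filter fun w => ¬ (‖w‖ < 1 - δ)).map norm).prod = a 0 := by
      rw [← habs0]
      conv_rhs => rw [← hsplit]
      rw [Multiset.map_add, Multiset.prod_add]
    have h1 : (Sm.map norm).prod ≤ (1-δ) ^ (Multiset.card Sm) := by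
      refine ms_prod_le_pow_card Sm norm (1-δ) (fun x _ => norm_nonneg x)
        fun x hx => ?_
      exact ((Multiset.mem_filter.1 hx).2).le
    have h2 : ((T.filter fun w => ¬ (‖w‖ < 1 - δ)).map norm).prod ≤ Pi := by
      have h2a : ((T.filter fun w => ¬ (‖w‖ < 1 - δ)).map norm).prod
          ≤ ((T.filter fun w => ¬ (‖w‖ < 1 - δ)).map g).prod :=
        ms_prod_le_prod _ norm g (fun x _ => norm_nonneg x)
          (fun x _ => le_max_right _ _)
      have hPisplit : Pi = (Sm.map g).prod
          * ((T.filter fun w => ¬ (‖w‖ < 1 - δ)).map g).prod := by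
        rw [hPidef]
        conv_lhs => rw [← hsplit]
        rw [Multiset.map_add, Multiset.prod_add]
      have h2b : (1:ℝ) ≤ (Sm.map g).prod := ms_one_le_prod _ g fun x _ => le_max_left _ _
      have h2c : (0:ℝ) ≤ ((T.filter fun w => ¬ (‖w‖ < 1 - δ)).map g).prod :=
        ms_prod_nonneg _ g fun x _ => le_trans zero_le_one (le_max_left _ _)
      rw [hPisplit]
      nlinarith
    have h3 : (0:ℝ) ≤ ((T.filter fun w => ¬ (‖w‖ < 1 - δ)).map norm).prod :=
      ms_prod_nonneg _ _ fun x _ => norm_nonneg x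
    have h4 : (0:ℝ) ≤ (1-δ) ^ (Multiset.card Sm) := by positivity
    calc a 0 = (Sm.map norm).prod
        * ((T.filter fun w => ¬ (‖w‖ < 1 - δ)).map norm).prod := habssplit.symm
      _ ≤ (1-δ) ^ (Multiset.card Sm) * Pi := by
          refine mul_le_mul h1 h2 h3 h4
  -- numeric bounds
  have hNpK : ((1:ℝ)+ε) ^ (Multiset.card Sp) ≤ K := hNp.trans hPiK
  have hNpbound : ((Multiset.card Sp : ℕ) : ℝ) ≤ 2*K/ε + 1 := by
    have := count_le ε K hε (Multiset.card Sp) hNpK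
    have hs := sqrt_le_self' hK1
    have h2 : 2 * Real.sqrt K / ε ≤ 2 * K / ε := by
      apply div_le_div_of_nonneg_right ?_ hε.le
      linarith
    linarith
  have hmul1 : ((1:ℝ)+η) * (1-δ) = 1 := by
    rw [hηdef]
    field_simp
    ring
  have hNmK : ((1:ℝ)+η) ^ (Multiset.card Sm) ≤ K * c0 := by
    have h1 : ((1:ℝ)+η) ^ (Multiset.card Sm) * a 0 ≤ Pi := by
      calc ((1:ℝ)+η) ^ (Multiset.card Sm) * a 0
          ≤ ((1:ℝ)+η) ^ (Multiset.card Sm) * ((1-δ) ^ (Multiset.card Sm) * Pi) := by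
            refine mul_le_mul_of_nonneg_left hNm (pow_nonneg (by linarith) _)
        _ = (((1:ℝ)+η) * (1-δ)) ^ (Multiset.card Sm) * Pi := by
            rw [mul_pow]; ring
        _ = Pi := by rw [hmul1, one_pow, one_mul]
    have h2 : ((1:ℝ)+η) ^ (Multiset.card Sm) ≤ Pi * (a 0)⁻¹ := by
      rw [← le_div_iff₀ (hpos 0)] at h1
      rwa [div_eq_mul_inv] at h1
    refine h2.trans ?_
    have h3 : (a 0)⁻¹ ≤ c0 := le_max_right _ _
    have h4 : (0:ℝ) ≤ (a 0)⁻¹ := inv_nonneg.2 (hpos 0).le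
    nlinarith
  have hNmbound : ((Multiset.card Sm : ℕ) : ℝ) ≤ 2*(K*c0)/η + 1 := by
    have := count_le η (K*c0) hηpos (Multiset.card Sm) hNmK
    have hKc1 : (1:ℝ) ≤ K * c0 := by nlinarith
    have hs := sqrt_le_self' hKc1
    have h2 : 2 * Real.sqrt (K*c0) / η ≤ 2 * (K*c0) / η := by
      apply div_le_div_of_nonneg_right ?_ hηpos.le
      linarith
    linarith
  -- combine
  have hfinal : (((Q n).roots.filter fun w => ε < |‖w‖ - 1|).card : ℝ)
      ≤ (2*K/ε + 1) + (2*(K*c0)/η + 1) := by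
    have hc : (((Q n).roots.filter fun w => ε < |‖w‖ - 1|).card : ℝ)
        ≤ ((Multiset.card Sp : ℕ) : ℝ) + ((Multiset.card Sm : ℕ) : ℝ) := by
      rw [← hTdef]
      exact_mod_cast hcard
    linarith
  refine hfinal.trans ?_
  have : A * Real.sqrt ((n:ℝ)+1) = K * (2/ε + 2*c0/η) := by
    rw [hAdef, hKdef]; ring
  rw [this]
  have e : 2*K/ε + 1 + (2*(K*c0)/η + 1) = K * (2/ε + 2*c0/η) + 2 := by ring
  rw [e]

end Stmt9Aux
set_option maxHeartbeats 1600000 in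
/-- Dilcher–Rubel, Theorem 3.3. Let `∑ a_k z^k` be a power series with
null radius of convergence, real non-negative coefficients, `a_0 ≠ 0`, and
`a_{n-1} a_{n+1} > a_n²` for all `n ≥ 1`. With `α_n = a_n^{1/n}` and the normalized
sections `q_n(z) = ∑_{k=0}^n a_k α_n^{-k} z^k`, the zero counting measures of `(q_n)`
converge absolutely to the unit circle: for every `ε > 0` the fraction of zeros `w` of
`q_n` with `||w| - 1| > ε` tends to `0`. -/
theorem stmt_9 (a : ℕ → ℝ) (α : ℕ → ℝ) (Q : ℕ → Polynomial ℂ)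
    (hnonneg : ∀ k, 0 ≤ a k)
    (ha0 : a 0 ≠ 0)
    (hturan : ∀ n : ℕ, 1 ≤ n → a n ^ 2 < a (n - 1) * a (n + 1))
    (hrad : Filter.limsup
      (fun k : ℕ => ((|a k| ^ ((k : ℝ)⁻¹) : ℝ) : EReal)) Filter.atTop = ⊤)
    (hα : ∀ n : ℕ, α n = a n ^ ((n : ℝ)⁻¹))
    (hQ : ∀ n : ℕ, Q n = ∑ k ∈ Finset.range (n + 1),
      Polynomial.C ((a k : ℂ) * ((α n : ℂ))⁻¹ ^ k) * Polynomial.X ^ k) :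
    ∀ ε : ℝ, 0 < ε →
      Filter.Tendsto (fun n : ℕ => (1 / (n : ℝ)) *
          (((Q n).roots.filter fun w => ε < |‖w‖ - 1|).card : ℝ))
        Filter.atTop (nhds 0) := by
  have hpos : ∀ k, 0 < a k := by
    intro k
    match k with
    | 0 => exact lt_of_le_of_ne (hnonneg 0) (Ne.symm ha0)
    | 1 =>
      have h := hturan 2 (by norm_num)
      norm_num at h
      nlinarith [hnonneg 1, hnonneg 3, sq_nonneg (a 2)]
    | (m+2) =>
      have h := hturan (m+1) (by omega)
      simp only [Nat.add_sub_cancel] at h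
      show 0 < a (m+1+1)
      nlinarith [hnonneg m, hnonneg (m+1+1), sq_nonneg (a (m+1))]
  have hcross : ∀ i j : ℕ, i ≤ j → a (i+1) * a j ≤ a i * a (j+1) := by
    intro i j hij
    refine Nat.le_induction (le_of_eq (mul_comm _ _)) ?_ j hij
    intro j hj ih
    have hT := hturan (j+1) (by omega)
    simp only [Nat.add_sub_cancel] at hT
    have key : (a (i+1) * a (j+1)) * (a j * a (j+1)) ≤ (a i * a (j+1+1)) * (a j * a (j+1)) := by
      calc (a (i+1) * a (j+1)) * (a j * a (j+1))
          = (a (i+1) * a j) * (a (j+1)^2) := by ring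
        _ ≤ (a i * a (j+1)) * (a j * a (j+1+1)) := by
            refine mul_le_mul ih hT.le (sq_nonneg _)
              (mul_nonneg (hpos i).le (hpos (j+1)).le)
        _ = (a i * a (j+1+1)) * (a j * a (j+1)) := by ring
    exact le_of_mul_le_mul_right key (mul_pos (hpos j) (hpos (j+1)))
  intro ε hε
  obtain ⟨A, hA0, hbound⟩ := Stmt9Aux.main_bound a α Q hpos hcross hα hQ ε hε
  set B : ℝ := A * Real.sqrt 2 + 2 with hBdef
  refine squeeze_zero' (g := fun n : ℕ => B * (Real.sqrt (n:ℝ))⁻¹) ?_ ?_ ?_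
  · filter_upwards with n
    have h1 : (0:ℝ) ≤ 1/(n:ℝ) := by positivity
    have h2 : (0:ℝ) ≤ (((Q n).roots.filter fun w => ε < |‖w‖ - 1|).card : ℝ) :=
      Nat.cast_nonneg _
    exact mul_nonneg h1 h2
  · filter_upwards [eventually_ge_atTop 2] with n hn2
    have hn1 : 1 ≤ n := by omega
    have hb := hbound n hn1
    have hn0 : (0:ℝ) < (n:ℝ) := by
      have : (1:ℝ) ≤ (n:ℝ) := by exact_mod_cast hn1
      linarith
    have hnr1 : (1:ℝ) ≤ (n:ℝ) := by exact_mod_cast hn1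
    have hsn : 0 < Real.sqrt (n:ℝ) := Real.sqrt_pos.2 hn0
    have hs1 : (1:ℝ) ≤ Real.sqrt (n:ℝ) := by
      have h := Real.sqrt_le_sqrt hnr1
      rwa [Real.sqrt_one] at h
    have h1 : Real.sqrt ((n:ℝ)+1) ≤ Real.sqrt 2 * Real.sqrt (n:ℝ) := by
      rw [← Real.sqrt_mul (by norm_num : (0:ℝ) ≤ 2)]
      exact Real.sqrt_le_sqrt (by linarith)
    have hcardle : (((Q n).roots.filter fun w => ε < |‖w‖ - 1|).card : ℝ)
        ≤ B * Real.sqrt (n:ℝ) := by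
      calc (((Q n).roots.filter fun w => ε < |‖w‖ - 1|).card : ℝ)
          ≤ A * Real.sqrt ((n:ℝ)+1) + 2 := hb
        _ ≤ A * (Real.sqrt 2 * Real.sqrt (n:ℝ)) + 2 * Real.sqrt (n:ℝ) := by
            have := mul_le_mul_of_nonneg_left h1 hA0
            nlinarith
        _ = B * Real.sqrt (n:ℝ) := by rw [hBdef]; ring
    have heq : 1/(n:ℝ) * (B * Real.sqrt (n:ℝ)) = B * (Real.sqrt (n:ℝ))⁻¹ := by
      have hnn : (n:ℝ) = Real.sqrt (n:ℝ) * Real.sqrt (n:ℝ) := (Real.mul_self_sqrt hn0.le).symm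
      field_simp
      linear_combination B * hnn.symm
    calc 1/(n:ℝ) * (((Q n).roots.filter fun w => ε < |‖w‖ - 1|).card : ℝ)
        ≤ 1/(n:ℝ) * (B * Real.sqrt (n:ℝ)) := by
          refine mul_le_mul_of_nonneg_left hcardle (by positivity)
      _ = B * (Real.sqrt (n:ℝ))⁻¹ := heq
  · have h1 : Filter.Tendsto (fun x : ℝ => x ^ ((1:ℝ)/2)) atTop atTop :=
      tendsto_rpow_atTop (by norm_num)
    have h2 : Filter.Tendsto (fun n : ℕ => (n:ℝ)) atTop atTop :=
      tendsto_natCast_atTop_atTop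
    have hs : Filter.Tendsto (fun n : ℕ => Real.sqrt (n:ℝ)) atTop atTop := by
      refine (h1.comp h2).congr fun n => ?_
      exact (Real.sqrt_eq_rpow _).symm
    have hinv : Filter.Tendsto (fun n : ℕ => (Real.sqrt (n:ℝ))⁻¹) atTop (nhds 0) :=
      hs.inv_tendsto_atTop
    have := hinv.const_mul B
    simpa using this
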